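/- Let E be a finite nonempty type, let P be a stochastic matrix on E, let π be an invariant probability vector of P, and let A ⊆ E be a subset with complement B such that I − P_{BB} is invertible; write Ĥ := (I − P_{BB})^{-1} and P^{(A)} := P_{AA} + P_{AB} Ĥ P_{BA}. If an E×E real matrix X satisfies Poisson's equation (I − P) X = I − e π^T, then its row block X_A indexed by A satisfies (I − P^{(A)}) X_A = [I, P_{AB} Ĥ] − (e + P_{AB} Ĥ e) π^T, and its row block X_B indexed by B satisfies X_B = Ĥ P_{BA} X_A + [O, Ĥ] − Ĥ e π^T. -/
import Mathlib

open Matrix BigOperators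

/-- The submatrix of `P` with rows indexed by `S` and columns indexed by `T`. -/
def subBlock {E : Type*} (P : Matrix E E ℝ) (S T : Set E) : Matrix ↥S ↥T ℝ :=
  Matrix.of fun i j => P i j

/-- The row block of an `E × E` matrix `X` with rows indexed by `S`. -/
def rowBlock {E : Type*} (X : Matrix E E ℝ) (S : Set E) : Matrix ↥S E ℝ :=
  Matrix.of fun i j => X i j

/-- The `ι × E` matrix whose columns indexed by `A` form `M` and whose columns indexed
by the complement of `A` form `N`. -/
def blockRow {E ι : Type*} (A : Set E) [DecidablePred (· ∈ A)]
    (M : Matrix ι ↥A ℝ) (N : Matrix ι ↥(Aᶜ) ℝ) : Matrix ι E ℝ :=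
  Matrix.of fun i j => if h : j ∈ A then M i ⟨j, h⟩ else N i ⟨j, h⟩

section Helpers

variable {E : Type*} [Fintype E] [DecidableEq E] (A : Set E) [DecidablePred (· ∈ A)]

lemma rowBlock_mul (P X : Matrix E E ℝ) (S : Set E) :
    rowBlock (P * X) S
      = subBlock P S A * rowBlock X A + subBlock P S Aᶜ * rowBlock X Aᶜ := by
  ext i j
  simp only [rowBlock, subBlock, Matrix.add_apply, Matrix.mul_apply, Matrix.of_apply]
  rw [← Fintype.sum_subtype_add_sum_subtype (· ∈ A) (fun k => P i k * X k j)]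
  congr 1

lemma rowBlock_sub (X Y : Matrix E E ℝ) (S : Set E) :
    rowBlock (X - Y) S = rowBlock X S - rowBlock Y S := rfl

lemma rowBlock_one_A :
    rowBlock (1 : Matrix E E ℝ) A = blockRow A (1 : Matrix ↥A ↥A ℝ) 0 := by
  ext i j
  simp only [rowBlock, blockRow, Matrix.of_apply]
  split
  · rename_i h
    simp [Matrix.one_apply, Subtype.ext_iff]
  · rename_i h
    have : (i : E) ≠ j := fun hij => h (hij ▸ i.2)
    simp [Matrix.one_apply, this]

lemma rowBlock_one_B :
    rowBlock (1 : Matrix E E ℝ) Aᶜ = blockRow A 0 (1 : Matrix ↥(Aᶜ) ↥(Aᶜ) ℝ) := by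
  ext i j
  simp only [rowBlock, blockRow, Matrix.of_apply]
  split
  · rename_i h
    have : (i : E) ≠ j := fun hij => i.2 (hij ▸ h)
    simp [Matrix.one_apply, this]
  · rename_i h
    simp [Matrix.one_apply, Subtype.ext_iff]

lemma rowBlock_vecMulVec (u : E → ℝ) (v : E → ℝ) (S : Set E) :
    rowBlock (vecMulVec u v) S = vecMulVec (fun i : ↥S => u i) v := rfl

lemma matmul_blockRow {m ι : Type*} [Fintype ι] (M : Matrix m ι ℝ)
    (N1 : Matrix ι ↥A ℝ) (N2 : Matrix ι ↥(Aᶜ) ℝ) :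
    M * blockRow A N1 N2 = blockRow A (M * N1) (M * N2) := by
  ext i j
  simp only [blockRow, Matrix.mul_apply, Matrix.of_apply]
  split <;> rfl

lemma mul_vecMulVec' {n ι : Type*} [Fintype ι] (M : Matrix n ι ℝ) (u : ι → ℝ) (v : E → ℝ) :
    M * vecMulVec u v = vecMulVec (M *ᵥ u) v := by
  ext i j
  simp [vecMulVec_apply, mul_apply, mulVec, dotProduct, Finset.sum_mul, mul_assoc]

lemma vecMulVec_add {n : Type*} (u w : n → ℝ) (v : E → ℝ) :
    vecMulVec (u + w) v = vecMulVec u v + vecMulVec w v := by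
  ext i j
  simp [vecMulVec_apply, add_mul]

end Helpers

theorem stmt13 {E : Type*} [Fintype E] [Nonempty E] [DecidableEq E]
    (P : Matrix E E ℝ)
    (hP0 : ∀ i j, 0 ≤ P i j) (hP1 : ∀ i, ∑ j, P i j = 1)
    (π : E → ℝ) (hπ0 : ∀ i, 0 ≤ π i) (hπ1 : ∑ i, π i = 1)
    (hπP : π ᵥ* P = π)
    (A : Set E) [DecidablePred (· ∈ A)]
    (hBB : IsUnit (1 - subBlock P Aᶜ Aᶜ))
    (X : Matrix E E ℝ)
    (hX : (1 - P) * X = 1 - Matrix.vecMulVec (fun _ => (1 : ℝ)) π) :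
    ((1 - (subBlock P A A +
          subBlock P A Aᶜ * (1 - subBlock P Aᶜ Aᶜ)⁻¹ * subBlock P Aᶜ A)) * rowBlock X A
        = blockRow A (1 : Matrix ↥A ↥A ℝ) (subBlock P A Aᶜ * (1 - subBlock P Aᶜ Aᶜ)⁻¹)
          - Matrix.vecMulVec
              ((fun _ : ↥A => (1 : ℝ)) +
                (subBlock P A Aᶜ * (1 - subBlock P Aᶜ Aᶜ)⁻¹) *ᵥ (fun _ : ↥(Aᶜ) => (1 : ℝ)))
              π)
    ∧ (rowBlock X Aᶜ
        = (1 - subBlock P Aᶜ Aᶜ)⁻¹ * subBlock P Aᶜ A * rowBlock X A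
          + blockRow A (0 : Matrix ↥(Aᶜ) ↥A ℝ) ((1 - subBlock P Aᶜ Aᶜ)⁻¹)
          - Matrix.vecMulVec ((1 - subBlock P Aᶜ Aᶜ)⁻¹ *ᵥ (fun _ : ↥(Aᶜ) => (1 : ℝ))) π) := by
  set PAA := subBlock P A A
  set PAB := subBlock P A Aᶜ
  set PBA := subBlock P Aᶜ A
  set PBB := subBlock P Aᶜ Aᶜ
  set H := (1 - PBB)⁻¹ with hHdef
  set XA := rowBlock X A
  set XB := rowBlock X Aᶜ
  set eA : ↥A → ℝ := fun _ => 1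
  set eB : ↥(Aᶜ) → ℝ := fun _ => 1
  set V1 := Matrix.vecMulVec eA π
  set V2 := Matrix.vecMulVec eB π
  set E1 := blockRow A (1 : Matrix ↥A ↥A ℝ) (0 : Matrix ↥A ↥(Aᶜ) ℝ)
  set E2 := blockRow A (0 : Matrix ↥(Aᶜ) ↥A ℝ) (1 : Matrix ↥(Aᶜ) ↥(Aᶜ) ℝ)
  have hH : H * (1 - PBB) = 1 :=
    Matrix.nonsing_inv_mul _ ((Matrix.isUnit_iff_isUnit_det _).mp hBB)
  -- block equations
  have hX' : X - P * X = 1 - Matrix.vecMulVec (fun _ => (1 : ℝ)) π := by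
    rw [← hX, Matrix.sub_mul, Matrix.one_mul]
  have eqA : XA - (PAA * XA + PAB * XB) = E1 - V1 := by
    have := congrArg (fun Y => rowBlock Y A) hX'
    simpa [rowBlock_sub, rowBlock_mul A P X A, rowBlock_one_A, rowBlock_vecMulVec,
      XA, XB, PAA, PAB, E1, V1, eA] using this
  have eqB : XB - (PBA * XA + PBB * XB) = E2 - V2 := by
    have := congrArg (fun Y => rowBlock Y Aᶜ) hX'
    simpa [rowBlock_sub, rowBlock_mul A P X Aᶜ, rowBlock_one_B, rowBlock_vecMulVec,
      XB, XA, PBA, PBB, E2, V2, eB] using this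
  -- second conclusion
  have h1 : (1 - PBB) * XB = PBA * XA + (E2 - V2) := by
    rw [← eqB, Matrix.sub_mul, Matrix.one_mul]
    abel
  have goal2 : XB = H * PBA * XA + blockRow A (0 : Matrix ↥(Aᶜ) ↥A ℝ) H
      - Matrix.vecMulVec (H *ᵥ eB) π := by
    have : XB = H * ((1 - PBB) * XB) := by
      rw [← Matrix.mul_assoc, hH, Matrix.one_mul]
    rw [this, h1, Matrix.mul_add, Matrix.mul_sub, ← Matrix.mul_assoc]
    have hE2 : H * E2 = blockRow A (0 : Matrix ↥(Aᶜ) ↥A ℝ) H := by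
      rw [show E2 = blockRow A 0 1 from rfl, matmul_blockRow, Matrix.mul_zero, Matrix.mul_one]
    have hV2 : H * V2 = Matrix.vecMulVec (H *ᵥ eB) π := by
      rw [show V2 = Matrix.vecMulVec eB π from rfl, mul_vecMulVec']
    rw [hE2, hV2]
    abel
  refine ⟨?_, goal2⟩
  -- first conclusion
  have h4 : XB - H * PBA * XA = blockRow A (0 : Matrix ↥(Aᶜ) ↥A ℝ) H
      - Matrix.vecMulVec (H *ᵥ eB) π := by
    rw [goal2]; abel
  have step1 : (1 - (PAA + PAB * H * PBA)) * XA
      = (XA - (PAA * XA + PAB * XB)) + PAB * (XB - H * PBA * XA) := by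
    simp only [Matrix.sub_mul, Matrix.add_mul, Matrix.one_mul, Matrix.mul_sub,
      Matrix.mul_add, Matrix.mul_assoc]
    abel
  rw [step1, eqA, h4, Matrix.mul_sub]
  have hE : PAB * blockRow A (0 : Matrix ↥(Aᶜ) ↥A ℝ) H = blockRow A 0 (PAB * H) := by
    rw [matmul_blockRow, Matrix.mul_zero]
  have hV : PAB * Matrix.vecMulVec (H *ᵥ eB) π = Matrix.vecMulVec ((PAB * H) *ᵥ eB) π := by
    rw [mul_vecMulVec', Matrix.mulVec_mulVec]
  rw [hE, hV]
  have hE1 : E1 + blockRow A (0 : Matrix ↥A ↥A ℝ) (PAB * H)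
      = blockRow A (1 : Matrix ↥A ↥A ℝ) (PAB * H) := by
    ext i j
    simp only [E1, blockRow, Matrix.add_apply, Matrix.of_apply]
    split <;> simp
  rw [show V1 = Matrix.vecMulVec eA π from rfl]
  calc E1 - Matrix.vecMulVec eA π + (blockRow A 0 (PAB * H) - Matrix.vecMulVec ((PAB * H) *ᵥ eB) π)
      = (E1 + blockRow A 0 (PAB * H)) - (Matrix.vecMulVec eA π + Matrix.vecMulVec ((PAB * H) *ᵥ eB) π) := by abel
    _ = blockRow A (1 : Matrix ↥A ↥A ℝ) (PAB * H)
        - Matrix.vecMulVec (eA + (PAB * H) *ᵥ eB) π := by rw [hE1, vecMulVec_add eA ((PAB * H) *ᵥ eB) π]
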